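/- Let n,m be positive integers, Q > 0, w ≥ 1. Let 0 < h₁ < ⋯ < hₙ and 0 < g₁ < ⋯ < g_m, let p ∈ ℝⁿ and q ∈ ℝᵐ be probability vectors with positive entries, and set aᵢ = 1/hᵢ², bⱼ = 1/gⱼ². Assume Σᵢ pᵢ/aᵢ < w Σⱼ qⱼ/bⱼ. Suppose A is an n×m matrix with nonnegative entries such that (i) each column of A sums to 1, (ii) Σᵢ Aᵢⱼ aᵢ = bⱼ for every j, and (iii) for every k ∈ {1,…,n}, Σ_{i=1}^k pᵢ/aᵢ ≤ w Σⱼ (qⱼ/bⱼ)(Σ_{i=1}^k Aᵢⱼ). Then for every f ∈ ℝⁿ satisfying fₙ ≥ ½log₂(2πe/hₙ²), f₁ ≤ ½log₂(2πe(Q + 1/h₁²)), and 2^{2fᵢ} − 2πe/hᵢ² ≥ 2^{2f_k} − 2πe/h_k² whenever i < k, one has Σᵢ pᵢ fᵢ − (w/2) Σⱼ qⱼ log₂(Σᵢ Aᵢⱼ 2^{2fᵢ}) ≤ ½ Σᵢ pᵢ log₂(2πe aᵢ) − (w/2) Σⱼ qⱼ log₂(2πe bⱼ); i.e., the point fᵢ*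 = ½log₂(2πe/hᵢ²) is optimal for this constrained maximization. -/

import Mathlib

open Finset Real

private lemma abel_nonneg (d : ℕ → ℝ) :
    ∀ (N : ℕ) (v : ℕ → ℝ), (∀ k < N, v (k + 1) ≤ v k) → 0 ≤ v N →
      (∀ k ≤ N, 0 ≤ ∑ i ∈ Finset.range (k + 1), d i) →
      0 ≤ ∑ i ∈ Finset.range (N + 1), d i * v i := by
  intro N
  induction N with
  | zero =>
    intro v _ h0 hpre
    simpa using mul_nonneg (by simpa using hpre 0 le_rfl) h0
  | succ N ih =>
    intro v hmono hN hpre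
    have h1 : 0 ≤ v (N + 1) * ∑ i ∈ Finset.range (N + 2), d i :=
      mul_nonneg hN (hpre (N + 1) le_rfl)
    have h2 : 0 ≤ ∑ i ∈ Finset.range (N + 1), d i * (v i - v (N + 1)) := by
      refine ih (fun i => v i - v (N + 1)) (fun k hk => ?_) ?_ (fun k hk => hpre k (by omega))
      · have := hmono k (by omega); simpa using this
      · have := hmono N (by omega); simp only [sub_nonneg]; linarith
    have h3 : ∑ i ∈ Finset.range (N + 2), d i * v i
        = ∑ i ∈ Finset.range (N + 1), d i * (v i - v (N + 1))
          + v (N + 1) * ∑ i ∈ Finset.range (N + 2), d i := by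
      have e : ∀ i, d i * v i = d i * (v i - v (N + 1)) + v (N + 1) * d i := by
        intro i; ring
      rw [Finset.sum_congr rfl (fun i _ => e i), Finset.sum_add_distrib, ← Finset.mul_sum,
        Finset.sum_range_succ (f := fun i => d i * (v i - v (N + 1)))]
      simp
    linarith

private lemma sum_Iic_fin {n : ℕ} (F : Fin (n + 1) → ℝ) :
    ∀ (k : ℕ) (hk : k < n + 1),
      ∑ i ∈ Finset.Iic (⟨k, hk⟩ : Fin (n + 1)), F i
        = ∑ i ∈ Finset.range (k + 1), (if h : i < n + 1 then F ⟨i, h⟩ else 0) := by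
  intro k
  induction k with
  | zero =>
    intro hk
    have : Finset.Iic (⟨0, hk⟩ : Fin (n + 1)) = {⟨0, hk⟩} := by
      ext i; simp only [Finset.mem_Iic, Finset.mem_singleton, Fin.le_def, Fin.ext_iff, Fin.val_mk]; omega
    rw [this]
    simp
  | succ k ih =>
    intro hk
    have hins : Finset.Iic (⟨k + 1, hk⟩ : Fin (n + 1))
        = insert ⟨k + 1, hk⟩ (Finset.Iic (⟨k, by omega⟩ : Fin (n + 1))) := by
      ext i
      simp only [Finset.mem_Iic, Finset.mem_insert, Fin.le_def, Fin.ext_iff]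
      omega
    rw [hins, Finset.sum_insert (by simp [Finset.mem_Iic, Fin.le_def]), ih (by omega),
      Finset.sum_range_succ _ (k + 1), dif_pos hk]
    ring

private lemma xlog_mono {C : ℝ} (hC : 0 < C) {d : ℝ} (hd : 0 ≤ d) {x y : ℝ}
    (hx : 0 < x) (hxy : x ≤ y) :
    x * Real.log ((C * x + d) / (C * x)) ≤ y * Real.log ((C * y + d) / (C * y)) := by
  have hy : 0 < y := lt_of_lt_of_le hx hxy
  have h1 : (C * x + d) / (C * x) = 1 + d / (C * x) := by field_simp
  have h2 : (C * y + d) / (C * y) = 1 + d / (C * y) := by field_simp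
  rw [h1, h2]
  have hcc := strictConcaveOn_log_Ioi.concaveOn
  have hxy1 : x / y ≤ 1 := (div_le_one hy).2 hxy
  have key := hcc.2 (Set.mem_Ioi.2 (show (0:ℝ) < 1 + d / (C * x) by positivity))
      (Set.mem_Ioi.2 one_pos) (show (0:ℝ) ≤ x / y by positivity)
      (show (0:ℝ) ≤ 1 - x / y by linarith) (show x / y + (1 - x / y) = 1 by ring)
  rw [smul_eq_mul, smul_eq_mul, smul_eq_mul, smul_eq_mul, Real.log_one, mul_zero, add_zero] at key
  have harg : x / y * (1 + d / (C * x)) + (1 - x / y) * 1 = 1 + d / (C * y) := by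
    field_simp
    ring
  rw [harg] at key
  calc x * Real.log (1 + d / (C * x)) = y * (x / y * Real.log (1 + d / (C * x))) := by
        field_simp
    _ ≤ y * Real.log (1 + d / (C * y)) := mul_le_mul_of_nonneg_left key hy.le

/-- Optimization core of Case 3 of Theorem 1 (the case `r(w,0) < 0`): with
`aᵢ = 1/hᵢ²`, `bⱼ = 1/gⱼ²`, `∑ pᵢ/aᵢ < w ∑ qⱼ/bⱼ`, and a nonnegative matrix `A`
whose columns sum to `1`, mix the `aᵢ` into the `bⱼ`, and satisfy the (prefix-sum)
majorization requirement, the point `fᵢ* = ½ log₂(2πe/hᵢ²)` is optimal for the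
constrained maximization problem (opt2). Logs are base 2. -/
theorem stmt2 (n m : ℕ) (Q w : ℝ) (hQ : 0 < Q) (hw : 1 ≤ w)
    (h : Fin (n + 1) → ℝ) (g : Fin (m + 1) → ℝ)
    (hh0 : ∀ i, 0 < h i) (hhmono : StrictMono h)
    (hg0 : ∀ j, 0 < g j) (hgmono : StrictMono g)
    (p : Fin (n + 1) → ℝ) (q : Fin (m + 1) → ℝ)
    (hp : ∀ i, 0 < p i) (hpsum : ∑ i, p i = 1)
    (hq : ∀ j, 0 < q j) (hqsum : ∑ j, q j = 1)
    (a : Fin (n + 1) → ℝ) (b : Fin (m + 1) → ℝ)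
    (ha : ∀ i, a i = 1 / (h i) ^ 2)
    (hb : ∀ j, b j = 1 / (g j) ^ 2)
    (hbal : ∑ i, p i / a i < w * ∑ j, q j / b j)
    (A : Matrix (Fin (n + 1)) (Fin (m + 1)) ℝ)
    (hA0 : ∀ i j, 0 ≤ A i j)
    (hAcol : ∀ j, ∑ i, A i j = 1)
    (hAa : ∀ j, ∑ i, A i j * a i = b j)
    (hmaj : ∀ k : Fin (n + 1), ∑ i ∈ Finset.Iic k, p i / a i ≤
      w * ∑ j, (q j / b j) * ∑ i ∈ Finset.Iic k, A i j)
    (f : Fin (n + 1) → ℝ)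
    (hfn : f (Fin.last n) ≥
      (1 / 2) * Real.logb 2 (2 * Real.pi * Real.exp 1 / (h (Fin.last n)) ^ 2))
    (hf1 : f 0 ≤ (1 / 2) * Real.logb 2 (2 * Real.pi * Real.exp 1 * (Q + 1 / (h 0) ^ 2)))
    (hEPI : ∀ i k : Fin (n + 1), i < k →
      (2 : ℝ) ^ (2 * f i) - 2 * Real.pi * Real.exp 1 / (h i) ^ 2 ≥
      (2 : ℝ) ^ (2 * f k) - 2 * Real.pi * Real.exp 1 / (h k) ^ 2) :
    ∑ i, p i * f i - (w / 2) * ∑ j, q j * Real.logb 2 (∑ i, A i j * (2 : ℝ) ^ (2 * f i)) ≤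
      (1 / 2) * ∑ i, p i * Real.logb 2 (2 * Real.pi * Real.exp 1 * a i) -
      (w / 2) * ∑ j, q j * Real.logb 2 (2 * Real.pi * Real.exp 1 * b j) := by
  have hπ := Real.pi_pos
  obtain ⟨c, hcdef⟩ : ∃ c : ℝ, c = 2 * Real.pi * Real.exp 1 := ⟨_, rfl⟩
  rw [← hcdef] at hfn hEPI ⊢
  obtain ⟨t, htdef⟩ : ∃ t : Fin (n + 1) → ℝ, ∀ i, t i = (2 : ℝ) ^ (2 * f i) :=
    ⟨_, fun _ => rfl⟩
  simp only [← htdef] at hEPI ⊢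
  have hc : 0 < c := by rw [hcdef]; positivity
  have hL : (0 : ℝ) < Real.log 2 := Real.log_pos one_lt_two
  have ha' : ∀ i, 0 < a i := fun i => by rw [ha]; exact div_pos one_pos (pow_pos (hh0 i) 2)
  have hb' : ∀ j, 0 < b j := fun j => by rw [hb]; exact div_pos one_pos (pow_pos (hg0 j) 2)
  have hca : ∀ i, c / (h i) ^ 2 = c * a i := fun i => by rw [ha]; field_simp
  have ht : ∀ i, 0 < t i := fun i => by
    rw [htdef]; exact Real.rpow_pos_of_pos (by norm_num) _
  -- all t i ≥ c * a i, and the gaps are antitone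
  have hlast : c * a (Fin.last n) ≤ t (Fin.last n) := by
    have h2 : Real.logb 2 (c * a (Fin.last n)) ≤ 2 * f (Fin.last n) := by
      rw [← hca]; linarith [hfn]
    calc c * a (Fin.last n)
        = (2 : ℝ) ^ Real.logb 2 (c * a (Fin.last n)) :=
          (Real.rpow_logb (by norm_num) (by norm_num) (mul_pos hc (ha' _))).symm
      _ ≤ (2 : ℝ) ^ (2 * f (Fin.last n)) :=
          Real.rpow_le_rpow_of_exponent_le one_le_two h2
      _ = t (Fin.last n) := (htdef _).symm
  have hδmono : ∀ i k : Fin (n + 1), i ≤ k → t k - c * a k ≤ t i - c * a i := by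
    intro i k hik
    rcases eq_or_lt_of_le hik with rfl | hlt
    · exact le_rfl
    · have := hEPI i k hlt
      rw [hca, hca] at this
      linarith
  have hge : ∀ i, c * a i ≤ t i := by
    intro i
    have := hδmono i (Fin.last n) (Fin.le_last i)
    linarith [hlast]
  -- u and v
  obtain ⟨u, hudef⟩ : ∃ u : Fin (n + 1) → ℝ,
      ∀ i, u i = Real.logb 2 (t i / (c * a i)) := ⟨_, fun _ => rfl⟩
  have hu0 : ∀ i, 0 ≤ u i := by
    intro i
    rw [hudef]
    exact Real.logb_nonneg one_lt_two ((one_le_div (mul_pos hc (ha' i))).2 (hge i))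
  have hf_eq : ∀ i, f i = 1 / 2 * Real.logb 2 (c * a i) + 1 / 2 * u i := by
    intro i
    have e : u i = 2 * f i - Real.logb 2 (c * a i) := by
      rw [hudef, Real.logb_div (ht i).ne' (mul_pos hc (ha' i)).ne', htdef,
        Real.logb_rpow (by norm_num) (by norm_num)]
    linarith
  have haanti : ∀ i k : Fin (n + 1), i ≤ k → a k ≤ a i := by
    intro i k hik
    rw [ha, ha]
    have h1 : h i ≤ h k := hhmono.monotone hik
    have h2 : (h i) ^ 2 ≤ (h k) ^ 2 := pow_le_pow_left₀ (hh0 i).le h1 2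
    have := hh0 i
    gcongr
  have hvmono : ∀ i k : Fin (n + 1), i ≤ k → a k * u k ≤ a i * u i := by
    intro i k hik
    have hai := ha' i
    have hak := ha' k
    have haik : a k ≤ a i := haanti i k hik
    have hdk : 0 ≤ t k - c * a k := sub_nonneg.2 (hge k)
    have hdik : t k - c * a k ≤ t i - c * a i := hδmono i k hik
    have e1 : ∀ l : Fin (n + 1), u l
        = Real.log ((c * a l + (t l - c * a l)) / (c * a l)) / Real.log 2 := by
      intro l
      rw [hudef, ← Real.log_div_log]
      congr 1
      congr 1
      ring
    rw [e1, e1]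
    have step1 : a k * Real.log ((c * a k + (t k - c * a k)) / (c * a k))
        ≤ a i * Real.log ((c * a i + (t k - c * a k)) / (c * a i)) :=
      xlog_mono hc hdk hak haik
    have step2 : a i * Real.log ((c * a i + (t k - c * a k)) / (c * a i))
        ≤ a i * Real.log ((c * a i + (t i - c * a i)) / (c * a i)) := by
      have harg : (c * a i + (t k - c * a k)) / (c * a i)
          ≤ (c * a i + (t i - c * a i)) / (c * a i) := by gcongr
      have hpos : (0 : ℝ) < (c * a i + (t k - c * a k)) / (c * a i) := by
        apply div_pos _ (mul_pos hc hai)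
        have := mul_pos hc hai
        linarith
      have := Real.log_le_log hpos harg
      exact mul_le_mul_of_nonneg_left this hai.le
    rw [← mul_div_assoc, ← mul_div_assoc]
    exact (div_le_div_iff_of_pos_right hL).2 (step1.trans step2)
  -- Jensen per column j
  have hjensen : ∀ j, Real.logb 2 (c * b j) + ∑ i, (A i j * a i / b j) * u i
      ≤ Real.logb 2 (∑ i, A i j * t i) := by
    intro j
    have hS : c * b j ≤ ∑ i, A i j * t i := by
      rw [← hAa j, Finset.mul_sum]
      refine Finset.sum_le_sum fun i _ => ?_
      have := mul_le_mul_of_nonneg_left (hge i) (hA0 i j)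
      nlinarith [hA0 i j]
    have hSpos : 0 < ∑ i, A i j * t i := lt_of_lt_of_le (mul_pos hc (hb' j)) hS
    have hWsum : ∑ i, A i j * a i / b j = 1 := by
      rw [← Finset.sum_div, hAa j, div_self (hb' j).ne']
    have hjen := (strictConcaveOn_log_Ioi.concaveOn).le_map_sum (t := Finset.univ)
        (w := fun i => A i j * a i / b j) (p := fun i => t i / (c * a i))
        (fun i _ => div_nonneg (mul_nonneg (hA0 i j) (ha' i).le) (hb' j).le) hWsum
        (fun i _ => Set.mem_Ioi.2 (div_pos (ht i) (mul_pos hc (ha' i))))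
    simp only [smul_eq_mul] at hjen
    have hsum_eq : ∑ i, (A i j * a i / b j) * (t i / (c * a i))
        = (∑ i, A i j * t i) / (c * b j) := by
      rw [Finset.sum_div]
      refine Finset.sum_congr rfl fun i _ => ?_
      have h1 := (ha' i).ne'
      have h2 := (hb' j).ne'
      field_simp
    rw [hsum_eq] at hjen
    have key : Real.log (c * b j) + ∑ i, (A i j * a i / b j) * Real.log (t i / (c * a i))
        ≤ Real.log (∑ i, A i j * t i) := by
      rw [Real.log_div hSpos.ne' (mul_pos hc (hb' j)).ne'] at hjen
      linarith
    have expand : Real.logb 2 (c * b j) + ∑ i, (A i j * a i / b j) * u i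
        = (Real.log (c * b j)
            + ∑ i, (A i j * a i / b j) * Real.log (t i / (c * a i))) / Real.log 2 := by
      rw [add_div, Finset.sum_div, ← Real.log_div_log]
      congr 1
      refine Finset.sum_congr rfl fun i _ => ?_
      rw [hudef, ← Real.log_div_log]
      ring
    rw [expand, ← Real.log_div_log]
    exact (div_le_div_iff_of_pos_right hL).2 key
  -- majorization / Abel step
  have habel : ∑ i, p i * u i ≤ w * ∑ j, q j * ∑ i, (A i j * a i / b j) * u i := by
    have hswap : w * ∑ j, q j * ∑ i, (A i j * a i / b j) * u i
        = ∑ i, (w * ∑ j, (q j / b j) * A i j) * (a i * u i) := by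
      simp_rw [Finset.mul_sum, Finset.sum_mul]
      rw [Finset.sum_comm]
      refine Finset.sum_congr rfl fun j _ => ?_
      refine Finset.sum_congr rfl fun i _ => ?_
      field_simp
    have hpu : ∑ i, p i * u i = ∑ i, (p i / a i) * (a i * u i) := by
      refine Finset.sum_congr rfl fun i _ => ?_
      have := (ha' i).ne'
      field_simp
    rw [hswap, hpu, ← sub_nonneg, ← Finset.sum_sub_distrib]
    have hsummand : ∀ i : Fin (n + 1),
        (w * ∑ j, (q j / b j) * A i j) * (a i * u i) - (p i / a i) * (a i * u i)
        = (w * ∑ j, (q j / b j) * A i j - p i / a i) * (a i * u i) := fun i => by ring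
    rw [Finset.sum_congr rfl fun i _ => hsummand i]
    -- move to ℕ
    set D : ℕ → ℝ := fun i =>
      if hi : i < n + 1 then w * ∑ j, (q j / b j) * A ⟨i, hi⟩ j - p ⟨i, hi⟩ / a ⟨i, hi⟩ else 0
      with hD
    set V : ℕ → ℝ := fun i => if hi : i < n + 1 then a ⟨i, hi⟩ * u ⟨i, hi⟩ else 0 with hV
    have hfin : ∑ i : Fin (n + 1), (w * ∑ j, (q j / b j) * A i j - p i / a i) * (a i * u i)
        = ∑ i ∈ Finset.range (n + 1), D i * V i := by
      rw [← Fin.sum_univ_eq_sum_range (fun i => D i * V i) (n + 1)]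
      refine Finset.sum_congr rfl fun i _ => ?_
      simp [hD, hV, i.isLt, i.is_le]
    rw [hfin]
    refine abel_nonneg D n V ?_ ?_ ?_
    · intro k hk
      simp only [hV, dif_pos (by omega : k + 1 < n + 1), dif_pos (by omega : k < n + 1)]
      exact hvmono ⟨k, by omega⟩ ⟨k + 1, by omega⟩ (by simp [Fin.le_def])
    · simp only [hV, dif_pos (by omega : n < n + 1)]
      exact mul_nonneg (ha' _).le (hu0 _)
    · intro k hk
      have hk' : k < n + 1 := by omega
      have e1 := sum_Iic_fin (fun i => w * ∑ j, (q j / b j) * A i j - p i / a i) k hk'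
      have e2 : ∑ i ∈ Finset.Iic (⟨k, hk'⟩ : Fin (n + 1)),
          (w * ∑ j, (q j / b j) * A i j - p i / a i)
          = w * ∑ j, (q j / b j) * ∑ i ∈ Finset.Iic (⟨k, hk'⟩ : Fin (n + 1)), A i j
            - ∑ i ∈ Finset.Iic (⟨k, hk'⟩ : Fin (n + 1)), p i / a i := by
        rw [Finset.sum_sub_distrib]
        congr 1
        rw [← Finset.mul_sum]
        congr 1
        rw [Finset.sum_comm]
        refine Finset.sum_congr rfl fun j _ => ?_
        rw [Finset.mul_sum]
      have e3 : ∑ i ∈ Finset.range (k + 1), D i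
          = ∑ i ∈ Finset.range (k + 1),
            (if h : i < n + 1 then
              (fun i : Fin (n + 1) => w * ∑ j, (q j / b j) * A i j - p i / a i) ⟨i, h⟩
            else 0) := rfl
      rw [e3, ← e1, e2]
      have := hmaj ⟨k, hk'⟩
      linarith
  -- put everything together
  have e1 : ∑ i, p i * f i
      = (1 / 2) * ∑ i, p i * Real.logb 2 (c * a i) + (1 / 2) * ∑ i, p i * u i := by
    rw [Finset.mul_sum, Finset.mul_sum, ← Finset.sum_add_distrib]
    exact Finset.sum_congr rfl fun i _ => by rw [hf_eq i]; ring
  have e2 : ∑ j, q j * (Real.logb 2 (c * b j) + ∑ i, (A i j * a i / b j) * u i)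
      = ∑ j, q j * Real.logb 2 (c * b j)
        + ∑ j, q j * ∑ i, (A i j * a i / b j) * u i := by
    rw [← Finset.sum_add_distrib]
    exact Finset.sum_congr rfl fun j _ => by ring
  have e3 : ∑ j, q j * (Real.logb 2 (c * b j) + ∑ i, (A i j * a i / b j) * u i)
      ≤ ∑ j, q j * Real.logb 2 (∑ i, A i j * t i) :=
    Finset.sum_le_sum fun j _ => mul_le_mul_of_nonneg_left (hjensen j) (hq j).le
  have hw2 : (0 : ℝ) ≤ w / 2 := by linarith
  have e4 := mul_le_mul_of_nonneg_left e3 hw2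
  rw [e2] at e4
  linarith [habel]
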